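/- Let A_0,…,A_{k−1} be d×d entrywise-nonnegative real matrices with sum A := A_0 + ⋯ + A_{k−1}, and let ρ := ρ(A) with ρ > 0. Suppose the joint spectral radius of the family equals ρ, i.e. max_{i_1,…,i_n ∈ {0,…,k−1}} ‖A_{i_1}⋯A_{i_n}‖^{1/n} → ρ as n → ∞. Let v ∈ ℝ^d be entrywise nonnegative with A v = ρ v. Then for every sequence (i_j)_{j≥1} with values in {0,…,k−1} that is not eventually periodic, liminf_{n→∞} ρ^{−n} ‖A_{i_1} A_{i_2} ⋯ A_{i_n} v‖ = 0. -/

import Mathlib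

open Matrix Filter Topology

/-- The Euclidean norm on `ℝ^d`. -/
noncomputable def euclNorm {d : ℕ} (x : Fin d → ℝ) : ℝ :=
  Real.sqrt (∑ i, (x i) ^ 2)

/-- The operator norm on `d × d` real matrices induced by the Euclidean norm on `ℝ^d`. -/
noncomputable def matOpNorm {d : ℕ} (M : Matrix (Fin d) (Fin d) ℝ) : ℝ :=
  sSup {r : ℝ | ∃ x : Fin d → ℝ, euclNorm x ≤ 1 ∧ r = euclNorm (M.mulVec x)}

/-- The spectral radius of a real square matrix: the maximum of `|μ|` over the complex
eigenvalues `μ` (roots of the characteristic polynomial over `ℂ`). -/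
noncomputable def specRad {d : ℕ} (M : Matrix (Fin d) (Fin d) ℝ) : ℝ :=
  sSup {r : ℝ | ∃ μ : ℂ, (M.map Complex.ofReal).charpoly.IsRoot μ ∧ r = ‖μ‖}

/-- The product `M_{w 0} M_{w 1} ⋯ M_{w (n-1)}` over a word `w` of length `n`. -/
noncomputable def wordProd {d k : ℕ} (A : Fin k → Matrix (Fin d) (Fin d) ℝ) {n : ℕ}
    (w : Fin n → Fin k) : Matrix (Fin d) (Fin d) ℝ :=
  (List.ofFn (fun j => A (w j))).prod

/-- A cone in `ℝ^d`: a topologically closed set with nonempty interior, closed under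
addition and under multiplication by nonnegative reals, with `K ∩ (-K) = {0}`. -/
def IsCone {d : ℕ} (K : Set (Fin d → ℝ)) : Prop :=
  IsClosed K ∧ (interior K).Nonempty ∧
    (∀ x ∈ K, ∀ y ∈ K, x + y ∈ K) ∧
    (∀ c : ℝ, 0 ≤ c → ∀ x ∈ K, c • x ∈ K) ∧
    (∀ x ∈ K, -x ∈ K → x = 0)

section aux
variable {d k : ℕ} (A : Fin k → Matrix (Fin d) (Fin d) ℝ)

lemma wordProd_nil (w : Fin 0 → Fin k) : wordProd A w = 1 := by
  simp [wordProd]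

lemma wordProd_one' (w : Fin 1 → Fin k) : wordProd A w = A (w 0) := by
  simp [wordProd]

lemma wordProd_snoc {n : ℕ} (w : Fin n → Fin k) (i : Fin k) :
    wordProd A (Fin.snoc w i) = wordProd A w * A i := by
  rw [wordProd, List.ofFn_succ', List.prod_concat]
  simp [wordProd, Fin.snoc_castSucc, Fin.snoc_last]

lemma mul_entry_nonneg {M N : Matrix (Fin d) (Fin d) ℝ}
    (hM : ∀ s t, 0 ≤ M s t) (hN : ∀ s t, 0 ≤ N s t) : ∀ s t, 0 ≤ (M * N) s t := by
  intro s t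
  rw [Matrix.mul_apply]
  exact Finset.sum_nonneg fun u _ => mul_nonneg (hM s u) (hN u t)

lemma mul_entry_mono {M M' N N' : Matrix (Fin d) (Fin d) ℝ}
    (hM : ∀ s t, 0 ≤ M s t) (hMM' : ∀ s t, M s t ≤ M' s t)
    (hNN' : ∀ s t, N s t ≤ N' s t) (hN : ∀ s t, 0 ≤ N s t) :
    ∀ s t, (M * N) s t ≤ (M' * N') s t := by
  intro s t
  rw [Matrix.mul_apply, Matrix.mul_apply]
  apply Finset.sum_le_sum
  intro u _
  exact mul_le_mul (hMM' s u) (hNN' u t) (hN u t) ((hM s u).trans (hMM' s u))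

lemma sum_mulVec' {ι : Type*} (s : Finset ι) (M : ι → Matrix (Fin d) (Fin d) ℝ)
    (v : Fin d → ℝ) : (∑ i ∈ s, M i).mulVec v = ∑ i ∈ s, (M i).mulVec v := by
  ext t
  simp only [Matrix.mulVec, dotProduct, Finset.sum_apply, Matrix.sum_apply,
    Finset.sum_mul]
  rw [Finset.sum_comm]

lemma mulVec_entry_nonneg {M : Matrix (Fin d) (Fin d) ℝ} {v : Fin d → ℝ}
    (hM : ∀ s t, 0 ≤ M s t) (hv : ∀ t, 0 ≤ v t) : ∀ t, 0 ≤ (M.mulVec v) t := by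
  intro t
  simp only [Matrix.mulVec, dotProduct]
  exact Finset.sum_nonneg fun u _ => mul_nonneg (hM t u) (hv u)

lemma mulVec_entry_mono {M M' : Matrix (Fin d) (Fin d) ℝ} {v : Fin d → ℝ}
    (hMM' : ∀ s t, M s t ≤ M' s t) (hv : ∀ t, 0 ≤ v t) :
    ∀ t, (M.mulVec v) t ≤ (M'.mulVec v) t := by
  intro t
  simp only [Matrix.mulVec, dotProduct]
  exact Finset.sum_le_sum fun u _ => mul_le_mul_of_nonneg_right (hMM' t u) (hv u)

variable (hA : ∀ i : Fin k, ∀ s t, 0 ≤ A i s t)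
include hA

lemma wordProd_nonneg {n : ℕ} (w : Fin n → Fin k) : ∀ s t, 0 ≤ wordProd A w s t := by
  induction n with
  | zero => intro s t; rw [wordProd_nil]; by_cases h : s = t <;> simp [Matrix.one_apply, h]
  | succ n ih =>
    intro s t
    rw [← Fin.snoc_init_self w, wordProd_snoc]
    exact mul_entry_nonneg (ih _) (hA _) s t

lemma sum_entry_nonneg : ∀ s t, 0 ≤ (∑ i, A i) s t := by
  intro s t
  simp only [Matrix.sum_apply]
  exact Finset.sum_nonneg fun i _ => hA i s t

lemma entry_le_sum (i : Fin k) : ∀ s t, A i s t ≤ (∑ i, A i) s t := by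
  intro s t
  simp only [Matrix.sum_apply]
  exact Finset.single_le_sum (fun j _ => hA j s t) (Finset.mem_univ i)

lemma wordProd_le_pow {n : ℕ} (w : Fin n → Fin k) :
    ∀ s t, wordProd A w s t ≤ ((∑ i, A i) ^ n) s t := by
  induction n with
  | zero => intro s t; rw [wordProd_nil, pow_zero]
  | succ n ih =>
    intro s t
    rw [← Fin.snoc_init_self w, wordProd_snoc, pow_succ]
    exact mul_entry_mono (wordProd_nonneg A hA _) (ih _) (entry_le_sum A hA _) (hA _) s t

omit hA in
lemma sum_wordProd (p : ℕ) :
    ∑ q : Fin p → Fin k, wordProd A q = (∑ i, A i) ^ p := by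
  induction p with
  | zero => simp [wordProd_nil, pow_zero]
  | succ p ih =>
    calc ∑ q : Fin (p+1) → Fin k, wordProd A q
        = ∑ x : Fin k × (Fin p → Fin k), wordProd A (Fin.snocEquiv (fun _ => Fin k) x) :=
          (Equiv.sum_comp (Fin.snocEquiv (fun _ => Fin k)) (fun q => wordProd A q)).symm
      _ = ∑ i : Fin k, ∑ q : Fin p → Fin k, wordProd A (Fin.snoc q i) := by
          rw [Fintype.sum_prod_type]; rfl
      _ = ∑ i : Fin k, (∑ q : Fin p → Fin k, wordProd A q) * A i := by
          simp [wordProd_snoc, Finset.sum_mul]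
      _ = (∑ i, A i) ^ (p+1) := by
          rw [ih, pow_succ, ← Finset.mul_sum]

-- snoc splitting of index functions
omit hA in
lemma fn_snoc_eq (m : ℕ) (f : ℕ → Fin k) :
    (fun j : Fin (m+1) => f ↑j) = Fin.snoc (fun j : Fin m => f ↑j) (f m) := by
  funext j
  refine Fin.lastCases ?_ ?_ j
  · simp
  · intro i; simp

end aux

lemma coord_tendsto {d k : ℕ} (A : Fin k → Matrix (Fin d) (Fin d) ℝ)
    (hA : ∀ i : Fin k, ∀ s t, 0 ≤ A i s t)
    (ρ : ℝ) (hρpos : 0 < ρ)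
    (v : Fin d → ℝ) (hv : ∀ i, 0 ≤ v i)
    (heig : (∑ i, A i).mulVec v = ρ • v)
    (idx : ℕ → Fin k)
    (hap : ¬ ∃ N p : ℕ, 1 ≤ p ∧ ∀ j ≥ N, idx (j + p) = idx j) :
    ∀ t, Tendsto (fun n => ((wordProd A (fun j : Fin n => idx j)).mulVec v) t / ρ ^ n)
      atTop (𝓝 0) := by
  set S : Matrix (Fin d) (Fin d) ℝ := ∑ i, A i with hSdef
  set P : ℕ → Matrix (Fin d) (Fin d) ℝ := fun n => wordProd A (fun j : Fin n => idx ↑j)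
    with hPdef
  have hρn : ∀ n : ℕ, (0:ℝ) < ρ ^ n := fun n => pow_pos hρpos n
  have hP0 : P 0 = 1 := wordProd_nil A _
  have hPsucc : ∀ n, P (n+1) = P n * A (idx n) := by
    intro n
    show wordProd A (fun j : Fin (n+1) => idx ↑j) = _
    rw [fn_snoc_eq n idx, wordProd_snoc]
  have hPnn : ∀ n s t, 0 ≤ P n s t := fun n => wordProd_nonneg A hA _
  have hPadd : ∀ n p, P (n + p) = P n * wordProd A (fun j : Fin p => idx (n + ↑j)) := by
    intro n p
    induction p with
    | zero => simp [wordProd_nil]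
    | succ p ih =>
      have h1 : (fun j : Fin (p+1) => idx (n + ↑j))
          = Fin.snoc (fun j : Fin p => idx (n + ↑j)) (idx (n + p)) :=
        fn_snoc_eq p (fun m => idx (n + m))
      rw [show n + (p+1) = (n+p)+1 from rfl, hPsucc, ih, h1, wordProd_snoc, mul_assoc]
  have hpowv : ∀ p : ℕ, (S ^ p).mulVec v = ρ ^ p • v := by
    intro p
    induction p with
    | zero => simp
    | succ p ih =>
      rw [pow_succ, ← Matrix.mulVec_mulVec, heig, Matrix.mulVec_smul, ih, smul_smul,
        pow_succ, mul_comm]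
  -- key sum identity
  have hsum : ∀ n p t, ∑ q : Fin p → Fin k, ((P n * wordProd A q).mulVec v) t
      = ρ ^ p * ((P n).mulVec v) t := by
    intro n p t
    have h1 : ∑ q : Fin p → Fin k, (P n * wordProd A q).mulVec v
        = (P n * S ^ p).mulVec v := by
      rw [← sum_mulVec', ← Finset.mul_sum, sum_wordProd]
    calc ∑ q : Fin p → Fin k, ((P n * wordProd A q).mulVec v) t
        = (∑ q : Fin p → Fin k, (P n * wordProd A q).mulVec v) t := by
          rw [Finset.sum_apply]
      _ = ((P n * S ^ p).mulVec v) t := by rw [h1]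
      _ = (P n).mulVec ((S ^ p).mulVec v) t := by rw [Matrix.mulVec_mulVec]
      _ = ρ ^ p * ((P n).mulVec v) t := by rw [hpowv, Matrix.mulVec_smul]; rfl
  have hterm_nn : ∀ n {p : ℕ} (q : Fin p → Fin k) t, 0 ≤ ((P n * wordProd A q).mulVec v) t :=
    fun n {p} q => mulVec_entry_nonneg (mul_entry_nonneg (hPnn n) (wordProd_nonneg A hA q)) hv
  have hle_total : ∀ n (p : ℕ) (q : Fin p → Fin k) t,
      ((P n * wordProd A q).mulVec v) t ≤ ρ ^ p * ((P n).mulVec v) t := by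
    intro n p q t
    rw [← hsum n p t]
    exact Finset.single_le_sum (fun q' _ => hterm_nn n q' t) (Finset.mem_univ q)
  have hdev : ∀ n (p : ℕ) (q : Fin p → Fin k), q ≠ (fun j : Fin p => idx (n + ↑j)) → ∀ t,
      ((P n * wordProd A q).mulVec v) t
        ≤ ρ ^ p * ((P n).mulVec v) t - ((P (n+p)).mulVec v) t := by
    intro n p q hq t
    have h1 : ((P n * wordProd A q).mulVec v) t
        ≤ ∑ q' ∈ Finset.univ.erase (fun j : Fin p => idx (n + ↑j)),
            ((P n * wordProd A q').mulVec v) t :=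
      Finset.single_le_sum (fun q' _ => hterm_nn n q' t)
        (Finset.mem_erase.mpr ⟨hq, Finset.mem_univ q⟩)
    have h2 : ∑ q' ∈ Finset.univ.erase (fun j : Fin p => idx (n + ↑j)),
          ((P n * wordProd A q').mulVec v) t
        = ρ ^ p * ((P n).mulVec v) t - ((P (n+p)).mulVec v) t := by
      rw [Finset.sum_erase_eq_sub (Finset.mem_univ _), hsum n p t, ← hPadd]
    linarith
  -- the normalized vectors g and their infimum u
  set g : ℕ → Fin d → ℝ := fun n t => ((P n).mulVec v) t / ρ ^ n with hgdef
  set u : Fin d → ℝ := fun t => ⨅ n, g n t with hudef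
  have hgnn : ∀ n t, 0 ≤ g n t := fun n t =>
    div_nonneg (mulVec_entry_nonneg (hPnn n) hv t) (hρn n).le
  have hg0 : ∀ t, g 0 t = v t := by
    intro t; simp [hgdef, hP0, Matrix.one_mulVec]
  have hgmul : ∀ n t, ((P n).mulVec v) t = ρ ^ n * g n t := by
    intro n t; rw [hgdef]; field_simp
  have hmono : ∀ n t, g (n+1) t ≤ g n t := by
    intro n t
    have key : ((P (n+1)).mulVec v) t ≤ ρ * ((P n).mulVec v) t := by
      have h := hle_total n 1 (fun _ => idx n) t
      rw [wordProd_one'] at h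
      rw [hPsucc n]
      simpa using h
    show ((P (n+1)).mulVec v) t / ρ ^ (n+1) ≤ ((P n).mulVec v) t / ρ ^ n
    rw [div_le_div_iff₀ (hρn (n+1)) (hρn n)]
    have h2 := mul_le_mul_of_nonneg_right key (hρn n).le
    calc ((P (n+1)).mulVec v) t * ρ ^ n ≤ (ρ * ((P n).mulVec v) t) * ρ ^ n := h2
      _ = ((P n).mulVec v) t * ρ ^ (n+1) := by ring
  have hganti : ∀ t, Antitone fun n => g n t :=
    fun t => antitone_nat_of_succ_le (fun n => hmono n t)
  have hbdd : ∀ t, BddBelow (Set.range fun n => g n t) :=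
    fun t => ⟨0, by rintro x ⟨n, rfl⟩; exact hgnn n t⟩
  have htendu : ∀ t, Tendsto (fun n => g n t) atTop (𝓝 (u t)) :=
    fun t => tendsto_atTop_ciInf (hganti t) (hbdd t)
  have hule : ∀ n t, u t ≤ g n t := fun n t => ciInf_le (hbdd t) n
  have hunn : ∀ t, 0 ≤ u t := fun t => le_ciInf fun n => hgnn n t
  -- main claim : u = 0
  have husz : ∀ t, u t = 0 := by
    by_contra hcon
    push_neg at hcon
    obtain ⟨s, hs0⟩ := hcon
    have hs : 0 < u s := lt_of_le_of_ne (hunn s) (Ne.symm hs0)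
    have hvs : 0 < v s := by
      have h := hule 0 s
      rw [hg0 s] at h
      exact lt_of_lt_of_le hs h
    have hgpos : ∀ n, 0 < g n s := fun n => lt_of_lt_of_le hs (hule n s)
    set c : ℝ := u s / v s with hcdef
    have hc : 0 < c := div_pos hs hvs
    set D : ℝ := ∑ t, v t with hDdef
    have hD : 0 < D := Finset.sum_pos' (fun t _ => hv t) ⟨s, Finset.mem_univ s, hvs⟩
    set z : ℕ → Fin d → ℝ := fun n t => if v t = 0 then 0 else P n s t / (ρ ^ n * g n s)
      with hzdef
    set w : Fin d → ℝ := fun t => if v t = 0 then 0 else 1 / v t with hwdef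
    have hzden : ∀ n, 0 < ρ ^ n * g n s := fun n => mul_pos (hρn n) (hgpos n)
    have hz0 : ∀ n t, 0 ≤ z n t := by
      intro n t
      simp only [hzdef]
      split_ifs
      · exact le_refl 0
      · exact div_nonneg (hPnn n s t) (hzden n).le
    have hzw : ∀ n t, z n t ≤ w t := by
      intro n t
      simp only [hzdef, hwdef]
      split_ifs with hvt
      · exact le_refl 0
      · have hvt' : 0 < v t := lt_of_le_of_ne (hv t) (Ne.symm hvt)
        rw [div_le_div_iff₀ (hzden n) hvt']
        have hmv : ((P n).mulVec v) s = ∑ t', P n s t' * v t' := rfl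
        have h1 : P n s t * v t ≤ ((P n).mulVec v) s := by
          rw [hmv]
          exact Finset.single_le_sum
            (fun t' _ => mul_nonneg (hPnn n s t') (hv t')) (Finset.mem_univ t)
        have h2 : ((P n).mulVec v) s = ρ ^ n * g n s := hgmul n s
        linarith
    have hzeval : ∀ n (x : Fin d → ℝ), (∀ t, 0 ≤ x t) → (∀ t, x t ≤ v t) →
        ∑ t, z n t * x t = ((P n).mulVec x) s / (ρ ^ n * g n s) := by
      intro n x hx0 hxv
      have hmv : ((P n).mulVec x) s = ∑ t, P n s t * x t := rfl
      rw [hmv, Finset.sum_div]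
      apply Finset.sum_congr rfl
      intro t _
      simp only [hzdef]
      by_cases hvt : v t = 0
      · have hx : x t = 0 := le_antisymm (hvt ▸ hxv t) (hx0 t)
        simp [hvt, hx]
      · simp only [hvt, if_false]
        rw [div_mul_eq_mul_div]
    have hxq0 : ∀ (p:ℕ) (q : Fin p → Fin k) t, 0 ≤ ((wordProd A q).mulVec v) t / ρ ^ p :=
      fun p q t => div_nonneg (mulVec_entry_nonneg (wordProd_nonneg A hA q) hv t) (hρn p).le
    have hxqv : ∀ (p:ℕ) (q : Fin p → Fin k) t, ((wordProd A q).mulVec v) t / ρ ^ p ≤ v t := by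
      intro p q t
      rw [div_le_iff₀ (hρn p)]
      have h1 : ((wordProd A q).mulVec v) t ≤ ((S ^ p).mulVec v) t :=
        mulVec_entry_mono (wordProd_le_pow A hA q) hv t
      rw [hpowv p] at h1
      have h2 : (ρ ^ p • v) t = ρ ^ p * v t := rfl
      rw [h2] at h1
      linarith [h1]
    have hmval : ∀ n (p:ℕ) (q : Fin p → Fin k),
        ∑ t, z n t * (((wordProd A q).mulVec v) t / ρ ^ p)
          = ((P n * wordProd A q).mulVec v) s / (ρ ^ (n+p) * g n s) := by
      intro n p q
      rw [hzeval n _ (hxq0 p q) (hxqv p q)]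
      have h1 : (P n).mulVec (fun t => ((wordProd A q).mulVec v) t / ρ ^ p)
          = (ρ^p)⁻¹ • ((P n * wordProd A q).mulVec v) := by
        have h2 : (fun t => ((wordProd A q).mulVec v) t / ρ ^ p)
            = (ρ^p)⁻¹ • ((wordProd A q).mulVec v) := by
          funext t
          simp [div_eq_inv_mul]
        rw [h2, Matrix.mulVec_smul, Matrix.mulVec_mulVec]
      rw [h1]
      have h3 : ((ρ^p)⁻¹ • ((P n * wordProd A q).mulVec v)) s
          = (ρ^p)⁻¹ * ((P n * wordProd A q).mulVec v) s := rfl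
      rw [h3, pow_add]
      field_simp
    have hlow : ∀ n' (p:ℕ), c ≤ ∑ t, z n' t *
        (((wordProd A (fun j : Fin p => idx (n' + ↑j))).mulVec v) t / ρ ^ p) := by
      intro n' p
      rw [hmval n' p _, ← hPadd n' p, hgmul (n'+p) s,
        mul_div_mul_left _ _ (ne_of_gt (hρn (n'+p))), hcdef]
      apply div_le_div₀ (hgnn (n'+p) s) (hule (n'+p) s) (hgpos n')
      rw [← hg0 s]
      exact hganti s (Nat.zero_le n')
    have hup : ∀ n (p:ℕ) (q : Fin p → Fin k), q ≠ (fun j : Fin p => idx (n + ↑j)) →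
        ∑ t, z n t * (((wordProd A q).mulVec v) t / ρ ^ p) ≤ (g n s - u s) / u s := by
      intro n p q hq
      rw [hmval n p q]
      have h1 := hdev n p q hq s
      rw [hgmul n s, hgmul (n+p) s] at h1
      have h2 : ((P n * wordProd A q).mulVec v) s ≤ ρ^(n+p) * (g n s - g (n+p) s) := by
        rw [pow_add] at h1 ⊢
        ring_nf at h1 ⊢
        linarith
      calc ((P n * wordProd A q).mulVec v) s / (ρ ^ (n+p) * g n s)
          ≤ (ρ^(n+p) * (g n s - g (n+p) s)) / (ρ ^ (n+p) * g n s) := by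
            gcongr
            exact (mul_pos (hρn (n+p)) (hgpos n)).le
          _ = (g n s - g (n+p) s) / g n s := by
            rw [mul_div_mul_left _ _ (ne_of_gt (hρn (n+p)))]
          _ ≤ (g n s - u s) / g n s := by
            rw [div_le_div_iff₀ (hgpos n) (hgpos n)]
            have := hule (n+p) s
            nlinarith [hgpos n]
          _ ≤ (g n s - u s) / u s := by
            rw [div_le_div_iff₀ (hgpos n) hs]
            have hnum : 0 ≤ g n s - u s := by linarith [hule n s]
            nlinarith [mul_le_mul_of_nonneg_left (hule n s) hnum]
    have hev : ∀ᶠ n in atTop, g n s - u s < c/2 * u s := by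
      have h := htendu s
      have h2 : ∀ᶠ n in atTop, g n s < u s + c/2 * u s := by
        apply h.eventually_lt_const
        nlinarith
      filter_upwards [h2] with n hn
      linarith
    obtain ⟨N₀, hN₀⟩ := eventually_atTop.mp hev
    push_neg at hap
    have hsep : ∀ n n', N₀ ≤ n → n < n' → ∃ x : Fin d → ℝ,
        (∀ t, 0 ≤ x t) ∧ (∀ t, x t ≤ v t) ∧
        c/2 ≤ (∑ t, z n' t * x t) - (∑ t, z n t * x t) := by
      intro n n' hn hnn'
      obtain ⟨j, hj, hne⟩ := hap n (n' - n) (by omega)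
      set p : ℕ := (j - n) + 1 with hpdef
      set q : Fin p → Fin k := fun m => idx (n' + ↑m) with hqdef
      refine ⟨fun t => ((wordProd A q).mulVec v) t / ρ ^ p, hxq0 p q, hxqv p q, ?_⟩
      have hlow' : c ≤ ∑ t, z n' t * (((wordProd A q).mulVec v) t / ρ ^ p) := hlow n' p
      have hqne : q ≠ fun m : Fin p => idx (n + ↑m) := by
        intro heq
        have h3 := congrFun heq ⟨j - n, by omega⟩
        simp only [hqdef] at h3
        apply hne
        have e1 : n' + ((⟨j - n, by omega⟩ : Fin p) : ℕ) = j + (n' - n) := by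
          simp; omega
        have e2 : n + ((⟨j - n, by omega⟩ : Fin p) : ℕ) = j := by
          simp; omega
        rw [e1, e2] at h3
        exact h3
      have hup' := hup n p q hqne
      have hlt : (g n s - u s) / u s < c/2 := by
        rw [div_lt_iff₀ hs]
        have := hN₀ n hn
        linarith
      linarith
    have hmemK : ∀ m : ℕ, z (N₀ + m) ∈ Set.Icc (0 : Fin d → ℝ) w := by
      intro m
      rw [Set.mem_Icc]
      exact ⟨fun t => hz0 _ t, fun t => hzw _ t⟩
    obtain ⟨a, -, φ, hφ, hconv⟩ :=
      (isCompact_Icc (a := (0 : Fin d → ℝ)) (b := w)).tendsto_subseq hmemK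
    have hε : 0 < c / (4 * D) := by positivity
    obtain ⟨J, hJ⟩ := (Metric.tendsto_atTop.mp hconv) (c / (4 * D)) hε
    set n : ℕ := N₀ + φ J with hndef
    set n' : ℕ := N₀ + φ (J + 1) with hn'def
    have hnn' : n < n' := by
      have := hφ (by omega : J < J + 1)
      omega
    obtain ⟨x, hx0, hxv, hsepx⟩ := hsep n n' (Nat.le_add_right _ _) hnn'
    have hdist : dist (z n') (z n) < c / (2 * D) := by
      have h1 := hJ J le_rfl
      have h2 := hJ (J+1) (Nat.le_succ J)
      simp only [Function.comp] at h1 h2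
      calc dist (z n') (z n) ≤ dist (z n') a + dist (z n) a := dist_triangle_right _ _ _
        _ < c/(4*D) + c/(4*D) := add_lt_add h2 h1
        _ = c/(2*D) := by ring
    have hbound : (∑ t, z n' t * x t) - (∑ t, z n t * x t) < c / 2 := by
      have h1 : (∑ t, z n' t * x t) - (∑ t, z n t * x t)
          = ∑ t, (z n' t - z n t) * x t := by
        rw [← Finset.sum_sub_distrib]
        apply Finset.sum_congr rfl
        intro t _
        ring
      rw [h1]
      have h2 : ∀ t, (z n' t - z n t) * x t ≤ dist (z n') (z n) * v t := by
        intro t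
        have ha : z n' t - z n t ≤ dist (z n') (z n) := by
          have hd := dist_le_pi_dist (z n') (z n) t
          rw [Real.dist_eq] at hd
          have habs := le_abs_self (z n' t - z n t)
          linarith
        calc (z n' t - z n t) * x t ≤ dist (z n') (z n) * x t :=
              mul_le_mul_of_nonneg_right ha (hx0 t)
          _ ≤ dist (z n') (z n) * v t :=
              mul_le_mul_of_nonneg_left (hxv t) dist_nonneg
      calc ∑ t, (z n' t - z n t) * x t ≤ ∑ t, dist (z n') (z n) * v t :=
            Finset.sum_le_sum (fun t _ => h2 t)
        _ = dist (z n') (z n) * D := by rw [← Finset.mul_sum]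
        _ < (c/(2*D)) * D := mul_lt_mul_of_pos_right hdist hD
        _ = c/2 := by field_simp
    linarith
  intro t
  have := htendu t
  rw [husz t] at this
  have heq : (fun n => ((wordProd A (fun j : Fin n => idx ↑j)).mulVec v) t / ρ ^ n)
      = fun n => g n t := by
    funext n
    rw [hgdef]
  rw [heq]
  exact this

/-- for entrywise-nonnegative matrices whose joint spectral radius equals
`ρ = ρ(A) > 0`, and a nonnegative `ρ`-eigenvector `v` of the sum matrix, every sequence of
indices that is not eventually periodic satisfies
`liminf ρ^{-n} ‖A_{i_1} ⋯ A_{i_n} v‖ = 0`. -/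

theorem stmt11 {d k : ℕ} (hk : 0 < k) (A : Fin k → Matrix (Fin d) (Fin d) ℝ)
    (hA : ∀ i : Fin k, ∀ s t, 0 ≤ A i s t)
    (ρ : ℝ) (hρ : ρ = specRad (∑ i, A i)) (hρpos : 0 < ρ)
    (hjsr : Tendsto
      (fun n : ℕ => ⨆ w : Fin n → Fin k, matOpNorm (wordProd A w) ^ ((1 : ℝ) / n))
      atTop (𝓝 ρ))
    (v : Fin d → ℝ) (hv : ∀ i, 0 ≤ v i)
    (heig : (∑ i, A i).mulVec v = ρ • v)
    (idx : ℕ → Fin k)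
    (hap : ¬ ∃ N p : ℕ, 1 ≤ p ∧ ∀ j ≥ N, idx (j + p) = idx j) :
    Filter.liminf
      (fun n : ℕ =>
        ρ ^ (-(n : ℤ)) * euclNorm ((wordProd A (fun j : Fin n => idx j)).mulVec v))
      atTop = 0 := by
  have hco := coord_tendsto A hA ρ hρpos v hv heig idx hap
  have hsq : Tendsto (fun n : ℕ =>
      ∑ t, (((wordProd A (fun j : Fin n => idx ↑j)).mulVec v) t / ρ ^ n) ^ 2)
      atTop (𝓝 0) := by
    have h0 : (0:ℝ) = ∑ _t : Fin d, (0:ℝ) := by simp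
    rw [h0]
    apply tendsto_finset_sum
    intro t _
    have h1 := (hco t).pow 2
    simpa using h1
  have hs2 : Tendsto (fun n : ℕ =>
      Real.sqrt (∑ t, (((wordProd A (fun j : Fin n => idx ↑j)).mulVec v) t / ρ ^ n) ^ 2))
      atTop (𝓝 0) := by
    have h1 := (Real.continuous_sqrt.tendsto 0).comp hsq
    simpa [Function.comp_def] using h1
  have htend : Tendsto (fun n : ℕ =>
      ρ ^ (-(n : ℤ)) * euclNorm ((wordProd A (fun j : Fin n => idx j)).mulVec v))
      atTop (𝓝 0) := by
    apply hs2.congr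
    intro n
    have hρn : (0:ℝ) < ρ ^ n := pow_pos hρpos n
    set X : Fin d → ℝ := (wordProd A (fun j : Fin n => idx ↑j)).mulVec v with hX
    rw [euclNorm, _root_.zpow_neg, zpow_natCast]
    calc Real.sqrt (∑ t, (X t / ρ ^ n) ^ 2)
        = Real.sqrt ((∑ t, (X t) ^ 2) * ((ρ ^ n)⁻¹) ^ 2) := by
          congr 1
          rw [Finset.sum_mul]
          apply Finset.sum_congr rfl
          intro t _
          rw [div_eq_mul_inv, mul_pow]
      _ = Real.sqrt (∑ t, (X t) ^ 2) * Real.sqrt (((ρ ^ n)⁻¹) ^ 2) :=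
          Real.sqrt_mul (Finset.sum_nonneg fun t _ => sq_nonneg (X t)) _
      _ = Real.sqrt (∑ t, (X t) ^ 2) * (ρ ^ n)⁻¹ := by
          rw [Real.sqrt_sq (inv_nonneg.mpr hρn.le)]
      _ = (ρ ^ n)⁻¹ * Real.sqrt (∑ t, (X t) ^ 2) := mul_comm _ _
  exact htend.liminf_eq
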